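/- Let g be the n×n block upper-triangular matrix [[z, y, x],[0, I_d, y'],[0, 0, w]] (blocks of sizes ℓ, d, ℓ) with z ∈ GL_ℓ(k). Then gᵀ J g = J if and only if the three conditions hold: w = K z^{−T} K, y' = −J'^{−1} yᵀ z^{−T} K, and xᵀ K w + y'ᵀ J' y' + wᵀ K x = 0. Moreover, any such g automatically has determinant 1, hence lies in SO(J). -/

import Mathlib

open Matrix

noncomputable section

/-- Index type for the 3-block decomposition of size `ℓ + d + ℓ`. -/
abbrev Idx (ℓ d : ℕ) : Type := Fin ℓ ⊕ (Fin d ⊕ Fin ℓ)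

variable {k : Type*} [Field k]

/-- The `n × n` matrix built out of nine blocks of sizes `ℓ, d, ℓ`. -/
def blk3 {ℓ d : ℕ}
    (A : Matrix (Fin ℓ) (Fin ℓ) k) (B : Matrix (Fin ℓ) (Fin d) k) (C : Matrix (Fin ℓ) (Fin ℓ) k)
    (D : Matrix (Fin d) (Fin ℓ) k) (E : Matrix (Fin d) (Fin d) k) (F : Matrix (Fin d) (Fin ℓ) k)
    (G : Matrix (Fin ℓ) (Fin ℓ) k) (H : Matrix (Fin ℓ) (Fin d) k) (I : Matrix (Fin ℓ) (Fin ℓ) k) :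
    Matrix (Idx ℓ d) (Idx ℓ d) k :=
  Matrix.fromBlocks A (Matrix.fromCols B C) (Matrix.fromRows D G) (Matrix.fromBlocks E F H I)

/-- The `ℓ × ℓ` exchange matrix `K` (ones on the antidiagonal). -/
def exK (k : Type*) [Field k] (ℓ : ℕ) : Matrix (Fin ℓ) (Fin ℓ) k :=
  Matrix.of fun i j => if (i : ℕ) + (j : ℕ) = ℓ - 1 then 1 else 0

/-- The symmetric matrix `J = [[0,0,K],[0,J',0],[K,0,0]]`. -/
def Jmat {d : ℕ} (ℓ : ℕ) (J' : Matrix (Fin d) (Fin d) k) : Matrix (Idx ℓ d) (Idx ℓ d) k :=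
  blk3 0 0 (exK k ℓ) 0 J' 0 (exK k ℓ) 0 0

/-- The special orthogonal group of an invertible symmetric matrix `S`:
`SO(S) = {g : gᵀ S g = S, det g = 1}`. -/
def SO {m : Type*} [Fintype m] [DecidableEq m] (S : Matrix m m k) : Set (Matrix m m k) :=
  {g | gᵀ * S * g = S ∧ g.det = 1}

/-- Upper unitriangular matrices (the group `Z_ℓ`). -/
def IsUnitri {ℓ : ℕ} (z : Matrix (Fin ℓ) (Fin ℓ) k) : Prop :=
  (∀ i, z i i = 1) ∧ ∀ i j : Fin ℓ, (j : ℕ) < (i : ℕ) → z i j = 0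

/-- The unipotent subgroup `V_ℓ ⊆ SO(J)`: elements of `SO(J)` of block form
`[[z, y, x], [0, I, y'], [0, 0, w]]` with `z` upper unitriangular. -/
def Vl {d : ℕ} (ℓ : ℕ) (J' : Matrix (Fin d) (Fin d) k) :
    Set (Matrix (Idx ℓ d) (Idx ℓ d) k) :=
  {g | g ∈ SO (Jmat ℓ J') ∧ ∃ z y x y' w, IsUnitri z ∧ g = blk3 z y x 0 1 y' 0 0 w}

/-- The top-left `ℓ × ℓ` block `z` of a matrix. -/
def zBlk {ℓ d : ℕ} (g : Matrix (Idx ℓ d) (Idx ℓ d) k) : Matrix (Fin ℓ) (Fin ℓ) k :=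
  Matrix.of fun i j => g (Sum.inl i) (Sum.inl j)

/-- The top-middle `ℓ × d` block `y` of a matrix. -/
def yBlk {ℓ d : ℕ} (g : Matrix (Idx ℓ d) (Idx ℓ d) k) : Matrix (Fin ℓ) (Fin d) k :=
  Matrix.of fun i j => g (Sum.inl i) (Sum.inr (Sum.inl j))

/-- Sum of the superdiagonal entries `Σ_{i} z_{i, i+1}`. -/
def superdiag {ℓ : ℕ} (z : Matrix (Fin ℓ) (Fin ℓ) k) : k :=
  ∑ i : Fin ℓ, ∑ j : Fin ℓ, if (j : ℕ) = (i : ℕ) + 1 then z i j else 0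

/-- The last row `y_ℓ` of an `ℓ × d` matrix (as a vector in `k^d`). -/
def lastRow {ℓ d : ℕ} (y : Matrix (Fin ℓ) (Fin d) k) : Fin d → k :=
  fun j => ∑ i : Fin ℓ, if (i : ℕ) + 1 = ℓ then y i j else 0

/-- The Bessel character `χ_{w0}(g) = ψ(Σ_i z_{i,i+1} + y_ℓ J' w0)`. -/
def besselChar {ℓ d : ℕ} (ψ : AddChar k ℂˣ) (J' : Matrix (Fin d) (Fin d) k) (w0 : Fin d → k)
    (g : Matrix (Idx ℓ d) (Idx ℓ d) k) : ℂˣ :=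
  ψ (superdiag (zBlk g) + lastRow (yBlk g) ⬝ᵥ J'.mulVec w0)

/-- The block-diagonal embedding `m : γ ↦ blockdiag(I_ℓ, γ, I_ℓ)`. -/
def mEmb {d : ℕ} (ℓ : ℕ) (γ : Matrix (Fin d) (Fin d) k) : Matrix (Idx ℓ d) (Idx ℓ d) k :=
  blk3 1 0 0 0 γ 0 0 0 1

/-- The stabilizer `H_{w0} = {γ ∈ SO(J') : γ J' w0 = J' w0}`. -/
def Hstab {d : ℕ} (J' : Matrix (Fin d) (Fin d) k) (w0 : Fin d → k) :
    Set (Matrix (Fin d) (Fin d) k) :=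
  {γ | γ ∈ SO J' ∧ γ.mulVec (J'.mulVec w0) = J'.mulVec w0}

/-- The Bessel subgroup `R_ℓ = {m(γ) v : γ ∈ H_{w0}, v ∈ V_ℓ}`. -/
def Rl {d : ℕ} (ℓ : ℕ) (J' : Matrix (Fin d) (Fin d) k) (w0 : Fin d → k) :
    Set (Matrix (Idx ℓ d) (Idx ℓ d) k) :=
  {g | ∃ γ ∈ Hstab J' w0, ∃ v ∈ Vl ℓ J', g = mEmb ℓ γ * v}

/-- The superdiagonal of `z`, as a vector in `k^{ℓ-1}`. -/
def sdVec {ℓ : ℕ} (z : Matrix (Fin ℓ) (Fin ℓ) k) : Fin (ℓ - 1) → k :=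
  fun i => z ⟨(i : ℕ), by have := i.isLt; omega⟩ ⟨(i : ℕ) + 1, by have := i.isLt; omega⟩

/-- The projection of `V_ℓ` onto its abelianization `k^{ℓ-1} × k^d`,
`g ↦ ((z_{1,2}, …, z_{ℓ-1,ℓ}), y_ℓ)`. -/
def projVl {ℓ d : ℕ} (g : Matrix (Idx ℓ d) (Idx ℓ d) k) : (Fin (ℓ - 1) → k) × (Fin d → k) :=
  (sdVec (zBlk g), lastRow (yBlk g))

section aux
variable {ℓ d : ℕ}
  {A A' : Matrix (Fin ℓ) (Fin ℓ) k} {B B' : Matrix (Fin ℓ) (Fin d) k} {C C' : Matrix (Fin ℓ) (Fin ℓ) k}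
  {D D' : Matrix (Fin d) (Fin ℓ) k} {E E' : Matrix (Fin d) (Fin d) k} {F F' : Matrix (Fin d) (Fin ℓ) k}
  {G G' : Matrix (Fin ℓ) (Fin ℓ) k} {H H' : Matrix (Fin ℓ) (Fin d) k} {I I' : Matrix (Fin ℓ) (Fin ℓ) k}

lemma blk3_mul :
    blk3 A B C D E F G H I * blk3 A' B' C' D' E' F' G' H' I' =
    blk3 (A*A'+B*D'+C*G') (A*B'+B*E'+C*H') (A*C'+B*F'+C*I')
         (D*A'+E*D'+F*G') (D*B'+E*E'+F*H') (D*C'+E*F'+F*I')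
         (G*A'+H*D'+I*G') (G*B'+H*E'+I*H') (G*C'+H*F'+I*I') := by
  ext i j
  rcases i with i | i | i <;> rcases j with j | j | j <;>
    simp [blk3, mul_apply, Fintype.sum_sum_type, Matrix.fromBlocks, Matrix.fromRows_apply_inl, Matrix.fromRows_apply_inr,
      Matrix.fromCols, Finset.sum_add_distrib, add_assoc]

lemma blk3_transpose :
    (blk3 A B C D E F G H I)ᵀ = blk3 Aᵀ Dᵀ Gᵀ Bᵀ Eᵀ Hᵀ Cᵀ Fᵀ Iᵀ := by
  ext i j
  rcases i with i | i | i <;> rcases j with j | j | j <;>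
    simp [blk3, Matrix.fromBlocks, Matrix.fromRows_apply_inl, Matrix.fromRows_apply_inr, Matrix.fromCols]

lemma blk3_inj (h : blk3 A B C D E F G H I = blk3 A' B' C' D' E' F' G' H' I') :
    A = A' ∧ B = B' ∧ C = C' ∧ D = D' ∧ E = E' ∧ F = F' ∧ G = G' ∧ H = H' ∧ I = I' := by
  refine ⟨?_, ?_, ?_, ?_, ?_, ?_, ?_, ?_, ?_⟩ <;> ext i j
  · exact congrFun (congrFun h (Sum.inl i)) (Sum.inl j)
  · exact congrFun (congrFun h (Sum.inl i)) (Sum.inr (Sum.inl j))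
  · exact congrFun (congrFun h (Sum.inl i)) (Sum.inr (Sum.inr j))
  · exact congrFun (congrFun h (Sum.inr (Sum.inl i))) (Sum.inl j)
  · exact congrFun (congrFun h (Sum.inr (Sum.inl i))) (Sum.inr (Sum.inl j))
  · exact congrFun (congrFun h (Sum.inr (Sum.inl i))) (Sum.inr (Sum.inr j))
  · exact congrFun (congrFun h (Sum.inr (Sum.inr i))) (Sum.inl j)
  · exact congrFun (congrFun h (Sum.inr (Sum.inr i))) (Sum.inr (Sum.inl j))
  · exact congrFun (congrFun h (Sum.inr (Sum.inr i))) (Sum.inr (Sum.inr j))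

lemma exK_transpose : (exK k ℓ)ᵀ = exK k ℓ := by
  ext i j; simp [exK, Matrix.transpose_apply, add_comm]

lemma exK_mul_exK : exK k ℓ * exK k ℓ = 1 := by
  ext i j
  have hi := i.isLt; have hj := j.isLt
  have hlt : ℓ - 1 - (i : ℕ) < ℓ := by omega
  simp only [mul_apply, exK, Matrix.of_apply, Matrix.one_apply]
  rw [Finset.sum_eq_single (⟨ℓ - 1 - (i : ℕ), hlt⟩ : Fin ℓ)]
  · simp only [Fin.ext_iff]
    split_ifs <;> first | (exfalso; omega) | norm_num
  · intro t _ ht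
    have ht' : (t : ℕ) ≠ ℓ - 1 - (i : ℕ) := fun hc => ht (Fin.ext hc)
    have := t.isLt
    split_ifs <;> first | (exfalso; omega) | norm_num
  · simp

lemma exK_det_sq : (exK k ℓ).det * (exK k ℓ).det = 1 := by
  rw [← Matrix.det_mul, exK_mul_exK, Matrix.det_one]
end aux

section aux2
variable {ℓ d : ℕ}
  {A A' : Matrix (Fin ℓ) (Fin ℓ) k} {B B' : Matrix (Fin ℓ) (Fin d) k} {C C' : Matrix (Fin ℓ) (Fin ℓ) k}
  {D D' : Matrix (Fin d) (Fin ℓ) k} {E E' : Matrix (Fin d) (Fin d) k} {F F' : Matrix (Fin d) (Fin ℓ) k}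
  {G G' : Matrix (Fin ℓ) (Fin ℓ) k} {H H' : Matrix (Fin ℓ) (Fin d) k} {I I' : Matrix (Fin ℓ) (Fin ℓ) k}

lemma blk3_ext (hA : A = A') (hB : B = B') (hC : C = C') (hD : D = D') (hE : E = E')
    (hF : F = F') (hG : G = G') (hH : H = H') (hI : I = I') :
    blk3 A B C D E F G H I = blk3 A' B' C' D' E' F' G' H' I' := by
  rw [hA, hB, hC, hD, hE, hF, hG, hH, hI]

lemma det_blk3_upper :
    (blk3 A B C 0 E F 0 0 I).det = A.det * (E.det * I.det) := by
  unfold blk3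
  rw [Matrix.fromRows_zero, Matrix.det_fromBlocks_zero₂₁, Matrix.det_fromBlocks_zero₂₁]
end aux2

/-- characterization of `gᵀ J g = J` for a block upper-triangular `g`,
and the fact that any such `g` automatically has determinant `1`, hence lies in `SO(J)`. -/
theorem blockTriangular_mem_SO_iff {k : Type*} [Field k] {ℓ d : ℕ}
    (hl : 0 < ℓ) (hd : 0 < d)
    (J' : Matrix (Fin d) (Fin d) k) (hJ'sym : J'ᵀ = J') (hJ'inv : IsUnit J')
    (z : Matrix (Fin ℓ) (Fin ℓ) k) (hz : IsUnit z)
    (y : Matrix (Fin ℓ) (Fin d) k) (x : Matrix (Fin ℓ) (Fin ℓ) k)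
    (y' : Matrix (Fin d) (Fin ℓ) k) (w : Matrix (Fin ℓ) (Fin ℓ) k)
    (g : Matrix (Idx ℓ d) (Idx ℓ d) k) (hg : g = blk3 z y x 0 1 y' 0 0 w) :
    (gᵀ * Jmat ℓ J' * g = Jmat ℓ J' ↔
      (w = exK k ℓ * (z⁻¹)ᵀ * exK k ℓ ∧
       y' = -(J'⁻¹ * yᵀ * (z⁻¹)ᵀ * exK k ℓ) ∧
       xᵀ * exK k ℓ * w + y'ᵀ * J' * y' + wᵀ * exK k ℓ * x = 0)) ∧
    (gᵀ * Jmat ℓ J' * g = Jmat ℓ J' → g.det = 1 ∧ g ∈ SO (Jmat ℓ J')) := by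
  set K := exK k ℓ with hKdef
  have hKs : Kᵀ = K := exK_transpose
  have hKK : K * K = 1 := exK_mul_exK
  have hzdet : IsUnit z.det := (Matrix.isUnit_iff_isUnit_det z).mp hz
  have hJdet : IsUnit J'.det := (Matrix.isUnit_iff_isUnit_det J').mp hJ'inv
  have hzi : z⁻¹ * z = 1 := Matrix.nonsing_inv_mul z hzdet
  have hiz : z * z⁻¹ = 1 := Matrix.mul_nonsing_inv z hzdet
  have hJi : J'⁻¹ * J' = 1 := Matrix.nonsing_inv_mul J' hJdet
  have hzit : zᵀ * (z⁻¹)ᵀ = 1 := by rw [← Matrix.transpose_mul, hzi, Matrix.transpose_one]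
  have hzti : (z⁻¹)ᵀ * zᵀ = 1 := by rw [← Matrix.transpose_mul, hiz, Matrix.transpose_one]
  have hK2 : ∀ M : Matrix (Fin ℓ) (Fin ℓ) k, K * (K * M) = M := fun M => by
    rw [← Matrix.mul_assoc, hKK, Matrix.one_mul]
  have hK2' : ∀ M : Matrix (Fin ℓ) (Fin d) k, K * (K * M) = M := fun M => by
    rw [← Matrix.mul_assoc, hKK, Matrix.one_mul]
  have hz1 : ∀ M : Matrix (Fin ℓ) (Fin ℓ) k, zᵀ * ((z⁻¹)ᵀ * M) = M := fun M => by
    rw [← Matrix.mul_assoc, hzit, Matrix.one_mul]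
  have hz2 : ∀ M : Matrix (Fin ℓ) (Fin ℓ) k, (z⁻¹)ᵀ * (zᵀ * M) = M := fun M => by
    rw [← Matrix.mul_assoc, hzti, Matrix.one_mul]
  have hJ1 : ∀ M : Matrix (Fin d) (Fin ℓ) k, J' * (J'⁻¹ * M) = M := fun M => by
    rw [← Matrix.mul_assoc, Matrix.mul_nonsing_inv J' hJdet, Matrix.one_mul]
  have hJ2 : ∀ M : Matrix (Fin d) (Fin ℓ) k, J'⁻¹ * (J' * M) = M := fun M => by
    rw [← Matrix.mul_assoc, hJi, Matrix.one_mul]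
  have hJblk : Jmat ℓ J' = blk3 0 0 K 0 J' 0 K 0 0 := rfl
  have hprod : gᵀ * Jmat ℓ J' * g =
      blk3 0 0 (zᵀ * (K * w)) 0 J' (J' * y' + yᵀ * (K * w))
        (wᵀ * (K * z)) (wᵀ * (K * y) + y'ᵀ * J')
        (wᵀ * (K * x) + (y'ᵀ * (J' * y') + xᵀ * (K * w))) := by
    rw [hg, hJblk, blk3_transpose, blk3_mul, blk3_mul]
    apply blk3_ext <;>
      simp only [Matrix.transpose_zero, Matrix.transpose_one, Matrix.mul_zero, Matrix.zero_mul,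
        Matrix.mul_one, Matrix.one_mul, add_zero, zero_add, Matrix.mul_assoc, add_assoc]
  have main : gᵀ * Jmat ℓ J' * g = Jmat ℓ J' ↔
      (w = K * (z⁻¹)ᵀ * K ∧
       y' = -(J'⁻¹ * yᵀ * (z⁻¹)ᵀ * K) ∧
       xᵀ * K * w + y'ᵀ * J' * y' + wᵀ * K * x = 0) := by
    rw [hprod, hJblk]
    constructor
    · intro h
      obtain ⟨-, -, h13, -, -, h23, -, -, h33⟩ := blk3_inj h
      have hw : w = K * (z⁻¹)ᵀ * K := by
        have h2 := congrArg (fun M => K * ((z⁻¹)ᵀ * M)) h13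
        simp only [hz2, hK2] at h2
        simp only [Matrix.mul_assoc]
        exact h2
      have hy' : y' = -(J'⁻¹ * yᵀ * (z⁻¹)ᵀ * K) := by
        have h2 := congrArg (fun M => J'⁻¹ * M) h23
        simp only [Matrix.mul_add, hJ2, Matrix.mul_zero] at h2
        have h3 : y' = -(J'⁻¹ * (yᵀ * (K * w))) := eq_neg_of_add_eq_zero_left h2
        rw [hw] at h3
        simp only [Matrix.mul_assoc, hK2] at h3
        simp only [Matrix.mul_assoc]
        exact h3
      refine ⟨hw, hy', ?_⟩
      simp only [Matrix.mul_assoc]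
      calc xᵀ * (K * w) + y'ᵀ * (J' * y') + wᵀ * (K * x)
          = wᵀ * (K * x) + (y'ᵀ * (J' * y') + xᵀ * (K * w)) := by abel
        _ = 0 := h33
    · rintro ⟨hw, hy', hx⟩
      subst hw; subst hy'
      refine blk3_ext rfl rfl ?_ rfl rfl ?_ ?_ ?_ ?_
      · simp only [Matrix.mul_assoc, hK2, hz1]
      · simp only [Matrix.mul_neg, Matrix.mul_assoc, hK2, hJ1, neg_add_cancel]
      · simp only [Matrix.transpose_mul, Matrix.transpose_transpose, hKs,
          Matrix.mul_assoc, hK2, hzi, Matrix.mul_one]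
      · simp only [Matrix.transpose_neg, Matrix.transpose_mul, Matrix.transpose_transpose,
          Matrix.transpose_nonsing_inv, hJ'sym, hKs, Matrix.neg_mul, Matrix.mul_assoc,
          hK2', hJi, Matrix.mul_one, add_neg_cancel]
      · simp only [Matrix.mul_assoc] at hx ⊢
        abel_nf at hx ⊢
        exact hx
  refine ⟨main, fun h => ?_⟩
  have hw := (main.mp h).1
  have hdg : g.det = 1 := by
    rw [hg, det_blk3_upper, hw, Matrix.det_one, Matrix.det_mul, Matrix.det_mul,
      Matrix.det_transpose, Matrix.det_nonsing_inv, Ring.inverse_eq_inv']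
    have h0 : z.det ≠ 0 := hzdet.ne_zero
    have hKd : K.det * K.det = 1 := exK_det_sq
    field_simp
    linear_combination hKd
  exact ⟨hdg, h, hdg⟩
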